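/- Let u : [0,∞) → [0,∞) be non-decreasing, and let X and Y be integer-valued random variables, each with a symmetric discrete log-concave distribution, with probability functions f_X and f_Y. If f_X majorizes f_Y, then E u(|X|) ≤ E u(|Y|). (Lemma 7.2: Schur-concavity of moment-type functionals on symmetric discrete log-concave distributions.) -/

import Mathlib

open MeasureTheory ProbabilityTheory Real

/-- The probability mass function of an integer-valued random variable `X`
on a probability space `(Ω, μ)`: `f(k) = P{X = k}`. -/
noncomputable def pmfOf {Ω : Type*} [MeasurableSpace Ω] (μ : Measure Ω) (X : Ω → ℤ)
    (k : ℤ) : ℝ :=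
  (μ (X ⁻¹' {k})).toReal

/-- A probability function `f : ℤ → ℝ` is discrete log-concave: it is non-negative,
its support is an integer interval, and `f(k)^2 ≥ f(k-1)·f(k+1)` for all `k`. -/
def IsDiscreteLogConcavePMF (f : ℤ → ℝ) : Prop :=
  (∀ k : ℤ, 0 ≤ f k) ∧
  (∀ k l m : ℤ, k ≤ l → l ≤ m → 0 < f k → 0 < f m → 0 < f l) ∧
  (∀ k : ℤ, f (k - 1) * f (k + 1) ≤ f k ^ 2)

/-- `M(X) = sup_{k ∈ ℤ} P{X = k}`. -/
noncomputable def maxProb {Ω : Type*} [MeasurableSpace Ω] (μ : Measure Ω) (X : Ω → ℤ) : ℝ :=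
  ⨆ k : ℤ, pmfOf μ X k

/-- `g : ℕ → [0,∞)` is a decreasing rearrangement of `f : ℤ → [0,∞)`: it is
non-increasing and equals `f ∘ τ` for some bijection `τ : ℕ ≃ ℤ`. -/
def IsDecreasingRearrangement (f : ℤ → ℝ) (g : ℕ → ℝ) : Prop :=
  (∀ i : ℕ, g (i + 1) ≤ g i) ∧ ∃ τ : ℕ ≃ ℤ, ∀ i : ℕ, g i = f (τ i)

/-- `f` majorizes `g`: all partial sums of a decreasing rearrangement of `f`
dominate those of a decreasing rearrangement of `g`. -/
def Majorizes (f g : ℤ → ℝ) : Prop :=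
  ∀ fd gd : ℕ → ℝ, IsDecreasingRearrangement f fd → IsDecreasingRearrangement g gd →
    ∀ n : ℕ, ∑ k ∈ Finset.range (n + 1), gd k ≤ ∑ k ∈ Finset.range (n + 1), fd k


section SchurAux

noncomputable def tauFun (i : ℕ) : ℤ :=
  if i % 2 = 0 then -((i / 2 : ℕ) : ℤ) else ((i / 2 : ℕ) : ℤ) + 1

noncomputable def tauInv (k : ℤ) : ℕ := if 0 < k then 2 * k.toNat - 1 else 2 * (-k).toNat

noncomputable def tauEquiv : ℕ ≃ ℤ where
  toFun := tauFun
  invFun := tauInv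
  left_inv := by
    intro i
    simp only [tauFun, tauInv]
    split_ifs <;> omega
  right_inv := by
    intro k
    simp only [tauFun, tauInv]
    split_ifs <;> omega

lemma tau_left_inv (i : ℕ) : tauInv (tauFun i) = i := tauEquiv.left_inv i
lemma tau_right_inv (k : ℤ) : tauFun (tauInv k) = k := tauEquiv.right_inv k

lemma tauFun_even (m : ℕ) : tauFun (2 * m) = -(m : ℤ) := by
  simp only [tauFun]; split_ifs <;> omega

lemma tauFun_odd (m : ℕ) : tauFun (2 * m + 1) = (m : ℤ) + 1 := by
  simp only [tauFun]; split_ifs <;> omega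

lemma tau_mem_Icc (j i : ℕ) : tauFun i ∈ Finset.Icc (-(j : ℤ)) j ↔ i < 2 * j + 1 := by
  simp only [tauFun, Finset.mem_Icc]
  split_ifs <;> omega

lemma unimodal (f : ℤ → ℝ) (hlc : IsDiscreteLogConcavePMF f) (hsym : ∀ k, f (-k) = f k) :
    ∀ n : ℕ, f ((n : ℤ) + 1) ≤ f n := by
  obtain ⟨h0, hint, hlcq⟩ := hlc
  intro n
  induction n with
  | zero =>
    have h := hlcq 0
    simp only [zero_sub, zero_add] at h
    rw [show (-1 : ℤ) = -(1 : ℤ) from rfl, hsym 1] at h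
    have h2 : f 1 ^ 2 ≤ f 0 ^ 2 := by nlinarith
    exact_mod_cast (pow_le_pow_iff_left₀ (h0 1) (h0 0) two_ne_zero).mp h2
  | succ n ih =>
    push_cast
    by_cases hz : f ((n : ℤ) + 1 + 1) ≤ 0
    · linarith [h0 ((n : ℤ) + 1)]
    · push_neg at hz
      have hneg : 0 < f (-((n : ℤ) + 1 + 1)) := by rw [hsym]; exact hz
      have hpos : 0 < f ((n : ℤ) + 1) := hint _ _ _ (by omega) (by omega) hneg hz
      have h := hlcq ((n : ℤ) + 1)
      have hsimp : ((n : ℤ) + 1 - 1) = (n : ℤ) := by ring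
      rw [hsimp] at h
      have hfn : 0 < f n := lt_of_lt_of_le hpos ih
      nlinarith

lemma tau_mono (f : ℤ → ℝ) (hlc : IsDiscreteLogConcavePMF f) (hsym : ∀ k, f (-k) = f k)
    (i : ℕ) : f (tauFun (i + 1)) ≤ f (tauFun i) := by
  rcases Nat.even_or_odd i with ⟨m, hm⟩ | ⟨m, hm⟩
  · subst hm
    rw [show m + m = 2 * m by ring, tauFun_odd, tauFun_even, hsym (m : ℤ)]
    exact unimodal f hlc hsym m
  · subst hm
    rw [show 2 * m + 1 + 1 = 2 * (m + 1) by ring, tauFun_odd, tauFun_even, hsym]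
    push_cast
    simp

lemma sum_range_tau (f : ℤ → ℝ) (j : ℕ) :
    ∑ i ∈ Finset.range (2 * j + 1), f (tauFun i) = ∑ k ∈ Finset.Icc (-(j : ℤ)) j, f k := by
  apply Finset.sum_nbij' (i := fun i => tauFun i) (j := fun k => tauInv k)
  · intro a ha
    exact (tau_mem_Icc j a).mpr (Finset.mem_range.mp ha)
  · intro k hk
    rw [Finset.mem_range, ← tau_mem_Icc j, tau_right_inv k]
    exact hk
  · intro a _; exact tau_left_inv a
  · intro k _; exact tau_right_inv k
  · intro a _; rfl

section Rep
variable {Ω : Type*} [MeasurableSpace Ω] (μ : Measure Ω) [IsProbabilityMeasure μ]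
  (X : Ω → ℤ) (u : ℝ → ℝ)

lemma total_mass (hX : Measurable X) : ∑' k : ℤ, μ (X ⁻¹' {k}) = 1 := by
  rw [← measure_iUnion (fun i j hij => (Set.disjoint_singleton.mpr hij).preimage X)
    (fun k => hX (measurableSet_singleton k))]
  have : (⋃ k : ℤ, X ⁻¹' {k}) = Set.univ := by ext ω; simp
  rw [this, measure_univ]

lemma ofReal_u_telescope (hu0 : ∀ x : ℝ, 0 ≤ x → 0 ≤ u x)
    (humono : ∀ x y : ℝ, 0 ≤ x → x ≤ y → u x ≤ u y) (n : ℕ) :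
    ENNReal.ofReal (u n) =
      ENNReal.ofReal (u 0) + ∑ j ∈ Finset.range n, ENNReal.ofReal (u (j + 1) - u j) := by
  induction n with
  | zero => simp
  | succ n ih =>
    rw [Finset.sum_range_succ, ← add_assoc, ← ih, ← ENNReal.ofReal_add
      (hu0 _ (by positivity)) (sub_nonneg.mpr (humono n (n+1) (by positivity) (by linarith)))]
    norm_num

lemma lintegral_rep (hX : Measurable X) (hu0 : ∀ x : ℝ, 0 ≤ x → 0 ≤ u x)
    (humono : ∀ x y : ℝ, 0 ≤ x → x ≤ y → u x ≤ u y) :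
    ∫⁻ ω, ENNReal.ofReal (u |(X ω : ℝ)|) ∂μ =
      ENNReal.ofReal (u 0) +
        ∑' j : ℕ, ENNReal.ofReal (u (j + 1) - u j) *
          ∑' k : ℤ, (if j < k.natAbs then μ (X ⁻¹' {k}) else 0) := by
  have h1 : ∫⁻ ω, ENNReal.ofReal (u |(X ω : ℝ)|) ∂μ
      = ∑' k : ℤ, ENNReal.ofReal (u |(k : ℝ)|) * μ (X ⁻¹' {k}) := by
    rw [← lintegral_map (f := fun k : ℤ => ENNReal.ofReal (u |(k : ℝ)|))
      (measurable_of_countable _) hX, lintegral_countable']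
    exact tsum_congr fun k => by rw [Measure.map_apply hX (measurableSet_singleton k)]
  rw [h1]
  have h2 : ∀ k : ℤ, ENNReal.ofReal (u |(k : ℝ)|) * μ (X ⁻¹' {k})
      = (ENNReal.ofReal (u 0) + ∑ j ∈ Finset.range k.natAbs,
          ENNReal.ofReal (u (j + 1) - u j)) * μ (X ⁻¹' {k}) := by
    intro k
    rw [show |(k : ℝ)| = ((k.natAbs : ℕ) : ℝ) by rw [Nat.cast_natAbs, Int.cast_abs],
      ofReal_u_telescope u hu0 humono]
  rw [tsum_congr h2]
  have h3 : ∀ k : ℤ, (ENNReal.ofReal (u 0) + ∑ j ∈ Finset.range k.natAbs,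
        ENNReal.ofReal (u (j + 1) - u j)) * μ (X ⁻¹' {k})
      = ENNReal.ofReal (u 0) * μ (X ⁻¹' {k}) +
        ∑' j : ℕ, (if j < k.natAbs then ENNReal.ofReal (u (j + 1) - u j) * μ (X ⁻¹' {k})
          else 0) := by
    intro k
    rw [add_mul, Finset.sum_mul]
    congr 1
    rw [tsum_eq_sum (s := Finset.range k.natAbs)
      (fun j hj => if_neg (by simpa using hj))]
    exact Finset.sum_congr rfl fun j hj => (if_pos (Finset.mem_range.mp hj)).symm
  rw [tsum_congr h3, ENNReal.tsum_add, ENNReal.tsum_mul_left, total_mass μ X hX, mul_one,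
    ENNReal.tsum_comm]
  congr 1
  refine tsum_congr fun j => ?_
  rw [ENNReal.tsum_mul_left.symm]
  exact tsum_congr fun k => by split_ifs <;> simp

lemma head_add_tail (hX : Measurable X) (j : ℕ) :
    (∑ k ∈ Finset.Icc (-(j : ℤ)) j, μ (X ⁻¹' {k})) +
      (∑' k : ℤ, if j < k.natAbs then μ (X ⁻¹' {k}) else 0) = 1 := by
  have h1 : (∑' k : ℤ, if j < k.natAbs then μ (X ⁻¹' {k}) else 0)
      = ∑' x : ↑((↑(Finset.Icc (-(j : ℤ)) j) : Set ℤ)ᶜ), μ (X ⁻¹' {(x : ℤ)}) := by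
    rw [tsum_subtype ((↑(Finset.Icc (-(j : ℤ)) j) : Set ℤ)ᶜ) (fun k => μ (X ⁻¹' {k}))]
    refine tsum_congr fun k => ?_
    rw [Set.indicator_apply]
    exact (if_congr (by simp [Finset.mem_Icc]; omega) rfl rfl).symm
  rw [h1, ← Finset.tsum_subtype' (Finset.Icc (-(j : ℤ)) j) (fun k => μ (X ⁻¹' {k})),
    ← total_mass μ X hX]
  exact Summable.tsum_add_tsum_compl (s := (↑(Finset.Icc (-(j : ℤ)) j) : Set ℤ))
    (f := fun k => μ (X ⁻¹' {k})) ENNReal.summable ENNReal.summable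

end Rep

end SchurAux

/-- Lemma 7.2 (Schur-concavity of moments on symmetric log-concave distributions):
if `u : [0,∞) → [0,∞)` is non-decreasing and `X`, `Y` are symmetric discrete
log-concave integer-valued random variables whose probability function `f_X`
majorizes `f_Y`, then `E u(|X|) ≤ E u(|Y|)`. -/
theorem schur_concavity_of_moments
    {Ω₁ Ω₂ : Type*} [MeasurableSpace Ω₁] [MeasurableSpace Ω₂]
    (μ : Measure Ω₁) (ν : Measure Ω₂) [IsProbabilityMeasure μ] [IsProbabilityMeasure ν]
    (u : ℝ → ℝ) (hu0 : ∀ x : ℝ, 0 ≤ x → 0 ≤ u x)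
    (humono : ∀ x y : ℝ, 0 ≤ x → x ≤ y → u x ≤ u y)
    (X : Ω₁ → ℤ) (Y : Ω₂ → ℤ) (hX : Measurable X) (hY : Measurable Y)
    (hXlc : IsDiscreteLogConcavePMF (pmfOf μ X))
    (hXsym : ∀ k : ℤ, pmfOf μ X (-k) = pmfOf μ X k)
    (hYlc : IsDiscreteLogConcavePMF (pmfOf ν Y))
    (hYsym : ∀ k : ℤ, pmfOf ν Y (-k) = pmfOf ν Y k)
    (hmaj : Majorizes (pmfOf μ X) (pmfOf ν Y)) :
    ∫⁻ ω, ENNReal.ofReal (u |(X ω : ℝ)|) ∂μ ≤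
      ∫⁻ ω, ENNReal.ofReal (u |(Y ω : ℝ)|) ∂ν := by
  rw [lintegral_rep μ X u hX hu0 humono, lintegral_rep ν Y u hY hu0 humono]
  refine add_le_add_right (ENNReal.tsum_le_tsum fun j => mul_le_mul_right ?_ _) _
  -- head comparison via majorization
  have hfd : IsDecreasingRearrangement (pmfOf μ X) (fun i => pmfOf μ X (tauFun i)) :=
    ⟨fun i => tau_mono _ hXlc hXsym i, ⟨tauEquiv, fun i => rfl⟩⟩
  have hgd : IsDecreasingRearrangement (pmfOf ν Y) (fun i => pmfOf ν Y (tauFun i)) :=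
    ⟨fun i => tau_mono _ hYlc hYsym i, ⟨tauEquiv, fun i => rfl⟩⟩
  have h := hmaj _ _ hfd hgd (2 * j)
  rw [sum_range_tau, sum_range_tau] at h
  have hXfin : (∑ k ∈ Finset.Icc (-(j : ℤ)) j, μ (X ⁻¹' {k})) ≠ ⊤ :=
    (ENNReal.sum_lt_top.mpr fun k _ => measure_lt_top μ _).ne
  have hYfin : (∑ k ∈ Finset.Icc (-(j : ℤ)) j, ν (Y ⁻¹' {k})) ≠ ⊤ :=
    (ENNReal.sum_lt_top.mpr fun k _ => measure_lt_top ν _).ne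
  have hhead : (∑ k ∈ Finset.Icc (-(j : ℤ)) j, ν (Y ⁻¹' {k}))
      ≤ ∑ k ∈ Finset.Icc (-(j : ℤ)) j, μ (X ⁻¹' {k}) := by
    rw [← ENNReal.toReal_le_toReal hYfin hXfin,
      ENNReal.toReal_sum (fun k _ => (measure_lt_top ν _).ne),
      ENNReal.toReal_sum (fun k _ => (measure_lt_top μ _).ne)]
    exact h
  have e1 := head_add_tail μ X hX j
  have e2 := head_add_tail ν Y hY j
  have hC : (∑ k ∈ Finset.Icc (-(j : ℤ)) j, ν (Y ⁻¹' {k})) ≠ ⊤ := hYfin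
  have key : (∑ k ∈ Finset.Icc (-(j : ℤ)) j, ν (Y ⁻¹' {k})) +
      (∑' k : ℤ, if j < k.natAbs then μ (X ⁻¹' {k}) else 0)
      ≤ (∑ k ∈ Finset.Icc (-(j : ℤ)) j, ν (Y ⁻¹' {k})) +
      (∑' k : ℤ, if j < k.natAbs then ν (Y ⁻¹' {k}) else 0) := by
    calc _ ≤ (∑ k ∈ Finset.Icc (-(j : ℤ)) j, μ (X ⁻¹' {k})) +
        (∑' k : ℤ, if j < k.natAbs then μ (X ⁻¹' {k}) else 0) := add_le_add_left hhead _
    _ = 1 := e1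
    _ = _ := e2.symm
  exact (ENNReal.add_le_add_iff_left hC).mp key
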